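/- Let A₁₀ be the second derivative on L^p(0,1) with Dirichlet boundary conditions, with sine function S(t)f = (1/2)∫_{·-t}^{·+t} f̃(s) ds, and let B f := (α₀ f'(0), α₁ f'(1)) for f ∈ W^{2,p}(0,1) ∩ W^{1,p}_0(0,1). Then for t ∈ (0,1), B S(t) f = (α₀ f(t), -α₁ f(1-t)), and consequently ∫₀¹ |B S(s) f| ds ≤ (|α₀| + |α₁|) ‖f‖_{L^p(0,1)} for all f ∈ W^{2,p}(0,1) ∩ W^{1,p}_0(0,1). -/

import Mathlib

open MeasureTheory Set intervalIntegral

/-- The odd, 2-periodic extension f̃ of a function f on (0,1) to ℝ. -/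
noncomputable def oddPeriodicExt (g : ℝ → ℂ) : ℝ → ℂ := fun x =>
  if Int.fract (x / 2) < 1 / 2 then g (2 * Int.fract (x / 2))
  else - g (2 - 2 * Int.fract (x / 2))

/-- For the Dirichlet Laplacian on (0,1) with sine function
S(t)f = (1/2)∫_{·-t}^{·+t} f̃(s) ds and B f = (α₀ f'(0), α₁ f'(1)), one has
B S(t) f = (α₀ f(t), -α₁ f(1-t)) for t ∈ (0,1), and consequently
∫₀¹ |B S(s) f| ds ≤ (|α₀| + |α₁|) ‖f‖_{L^p(0,1)} (condition (R) in the paper). -/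
theorem BS_formula_and_bound
    (p : ℝ) (hp : 1 ≤ p) (α₀ α₁ : ℂ)
    (f : ℝ → ℂ) (hf : ContDiff ℝ 1 f) (hf0 : f 0 = 0) (hf1 : f 1 = 0) :
    (∀ t ∈ Ioo (0 : ℝ) 1,
      (α₀ * deriv (fun x : ℝ =>
          (1 / 2 : ℂ) * ∫ s in x - t..x + t, oddPeriodicExt f s) 0,
        α₁ * deriv (fun x : ℝ =>
          (1 / 2 : ℂ) * ∫ s in x - t..x + t, oddPeriodicExt f s) 1)
        = (α₀ * f t, -(α₁ * f (1 - t)))) ∧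
    (∫ s in (0 : ℝ)..1, ‖(α₀ * f s, -(α₁ * f (1 - s)))‖)
      ≤ (‖α₀‖ + ‖α₁‖) * (∫ x in (0 : ℝ)..1, ‖f x‖ ^ p) ^ (1 / p) := by
  have hfc : Continuous f := hf.continuous
  -- measurability of the extension
  have hfr : Measurable fun x : ℝ => Int.fract (x / 2) :=
    measurable_fract.comp (measurable_id.div_const 2)
  have hmeas : Measurable (oddPeriodicExt f) := by
    unfold oddPeriodicExt
    exact Measurable.ite (measurableSet_lt hfr measurable_const)
      (hfc.measurable.comp (hfr.const_mul 2))
      ((hfc.measurable.comp ((hfr.const_mul 2).const_sub 2)).neg)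
  -- uniform bound
  obtain ⟨M, hM⟩ : ∃ M, ∀ y ∈ Icc (0:ℝ) 2, ‖f y‖ ≤ M :=
    isCompact_Icc.exists_bound_of_continuousOn hfc.continuousOn
  have hg_bd : ∀ x, ‖oddPeriodicExt f x‖ ≤ M := by
    intro x
    have h1 : (0:ℝ) ≤ Int.fract (x/2) := Int.fract_nonneg _
    have h2 : Int.fract (x/2) < 1 := Int.fract_lt_one _
    unfold oddPeriodicExt
    split_ifs with h
    · exact hM _ ⟨by linarith, by linarith⟩
    · rw [norm_neg]; exact hM _ ⟨by linarith, by linarith⟩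
  -- interval integrability
  have hint : ∀ a b : ℝ, IntervalIntegrable (oddPeriodicExt f) volume a b := by
    intro a b
    rw [intervalIntegrable_iff]
    refine Integrable.mono' (integrableOn_const measure_Ioc_lt_top.ne)
      hmeas.aestronglyMeasurable.restrict
      (Filter.Eventually.of_forall fun x => hg_bd x)
  -- local formulas
  have h01 : ∀ x ∈ Ioo (0:ℝ) 1, oddPeriodicExt f x = f x := by
    intro x hx
    have hfr' : Int.fract (x/2) = x/2 :=
      Int.fract_eq_self.mpr ⟨by linarith [hx.1], by linarith [hx.2]⟩
    unfold oddPeriodicExt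
    rw [hfr', if_pos (by linarith [hx.2])]
    congr 1; ring
  have hneg : ∀ x ∈ Ioo (-1:ℝ) 0, oddPeriodicExt f x = -f (-x) := by
    intro x hx
    have hfr' : Int.fract (x/2) = x/2 + 1 := by
      rw [← Int.fract_add_one]
      exact Int.fract_eq_self.mpr ⟨by linarith [hx.1], by linarith [hx.2]⟩
    unfold oddPeriodicExt
    rw [hfr', if_neg (by push_neg; linarith [hx.1])]
    congr 1; ring
  have h12 : ∀ x ∈ Ioo (1:ℝ) 2, oddPeriodicExt f x = -f (2 - x) := by
    intro x hx
    have hfr' : Int.fract (x/2) = x/2 :=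
      Int.fract_eq_self.mpr ⟨by linarith [hx.1], by linarith [hx.2]⟩
    unfold oddPeriodicExt
    rw [hfr', if_neg (by push_neg; linarith [hx.1])]
    congr 1; ring
  -- derivative of the sine function
  have hD : ∀ (x₀ t : ℝ), ContinuousAt (oddPeriodicExt f) (x₀ + t) →
      ContinuousAt (oddPeriodicExt f) (x₀ - t) →
      HasDerivAt (fun x : ℝ => (1/2 : ℂ) * ∫ s in x - t..x + t, oddPeriodicExt f s)
        ((1/2 : ℂ) * (oddPeriodicExt f (x₀ + t) - oddPeriodicExt f (x₀ - t))) x₀ := by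
    intro x₀ t hc1 hc2
    have hsm : ∀ y : ℝ, StronglyMeasurableAtFilter (oddPeriodicExt f) (nhds y) :=
      fun y => ⟨univ, Filter.univ_mem, hmeas.aestronglyMeasurable.restrict⟩
    have H1 : HasDerivAt (fun y : ℝ => ∫ s in (0:ℝ)..y, oddPeriodicExt f s)
        (oddPeriodicExt f (x₀ + t)) (x₀ + t) :=
      integral_hasDerivAt_right (hint 0 (x₀ + t)) (hsm _) hc1
    have H2 : HasDerivAt (fun y : ℝ => ∫ s in (0:ℝ)..y, oddPeriodicExt f s)
        (oddPeriodicExt f (x₀ - t)) (x₀ - t) :=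
      integral_hasDerivAt_right (hint 0 (x₀ - t)) (hsm _) hc2
    have H1' := H1.scomp x₀ ((hasDerivAt_id x₀).add_const t)
    have H2' := H2.scomp x₀ ((hasDerivAt_id x₀).sub_const t)
    simp only [one_smul] at H1' H2'
    have heq : (fun x : ℝ => (1/2 : ℂ) * ∫ s in x - t..x + t, oddPeriodicExt f s)
        = fun x : ℝ => (1/2 : ℂ) * ((∫ s in (0:ℝ)..x + t, oddPeriodicExt f s)
            - ∫ s in (0:ℝ)..x - t, oddPeriodicExt f s) := by
      funext x
      rw [integral_interval_sub_left (hint 0 (x + t)) (hint 0 (x - t))]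
    rw [heq]
    exact (H1'.sub H2').const_mul (1/2 : ℂ)
  constructor
  · intro t ht
    -- values and continuity at the four relevant points
    have e1 : oddPeriodicExt f =ᶠ[nhds t] f :=
      Filter.eventuallyEq_of_mem (Ioo_mem_nhds ht.1 ht.2) h01
    have e2 : oddPeriodicExt f =ᶠ[nhds (-t)] (fun x => -f (-x)) :=
      Filter.eventuallyEq_of_mem (Ioo_mem_nhds (by linarith [ht.2]) (by linarith [ht.1])) hneg
    have e3 : oddPeriodicExt f =ᶠ[nhds (1 - t)] f :=
      Filter.eventuallyEq_of_mem (Ioo_mem_nhds (by linarith [ht.2]) (by linarith [ht.1])) h01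
    have e4 : oddPeriodicExt f =ᶠ[nhds (1 + t)] (fun x => -f (2 - x)) :=
      Filter.eventuallyEq_of_mem (Ioo_mem_nhds (by linarith [ht.1]) (by linarith [ht.2])) h12
    have c1 : ContinuousAt (oddPeriodicExt f) t := hfc.continuousAt.congr e1.symm
    have c2 : ContinuousAt (oddPeriodicExt f) (-t) :=
      ((hfc.comp continuous_neg).neg.continuousAt).congr e2.symm
    have c3 : ContinuousAt (oddPeriodicExt f) (1 - t) := hfc.continuousAt.congr e3.symm
    have c4 : ContinuousAt (oddPeriodicExt f) (1 + t) :=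
      ((hfc.comp (continuous_const.sub continuous_id)).neg.continuousAt).congr e4.symm
    have d0 := (hD 0 t (by rwa [zero_add]) (by rwa [zero_sub])).deriv
    have d1 := (hD 1 t c4 (by
        show ContinuousAt (oddPeriodicExt f) (1 - t); exact c3)).deriv
    rw [d0, d1]
    have v1 : oddPeriodicExt f (0 + t) = f t := by rw [zero_add]; exact h01 t ht
    have v2 : oddPeriodicExt f (0 - t) = -f t := by
      rw [zero_sub]
      rw [hneg (-t) ⟨by linarith [ht.2], by linarith [ht.1]⟩, neg_neg]
    have v3 : oddPeriodicExt f (1 + t) = -f (1 - t) := by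
      rw [h12 (1 + t) ⟨by linarith [ht.1], by linarith [ht.2]⟩]
      congr 1; ring
    have v4 : oddPeriodicExt f (1 - t) = f (1 - t) :=
      h01 (1 - t) ⟨by linarith [ht.2], by linarith [ht.1]⟩
    rw [v1, v2, v3, v4]
    simp only [Prod.mk.injEq]
    constructor <;> ring
  · -- the integral bound
    have hcont1 : Continuous fun s : ℝ => ‖(α₀ * f s, -(α₁ * f (1 - s)))‖ := by
      apply Continuous.norm
      exact ((continuous_const.mul hfc).prodMk
        ((continuous_const.mul (hfc.comp (continuous_const.sub continuous_id))).neg))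
    have hi1 : IntervalIntegrable (fun s : ℝ => ‖α₀‖ * ‖f s‖ + ‖α₁‖ * ‖f (1 - s)‖)
        volume 0 1 := by
      apply Continuous.intervalIntegrable
      fun_prop
    have step1 : (∫ s in (0:ℝ)..1, ‖(α₀ * f s, -(α₁ * f (1 - s)))‖)
        ≤ ∫ s in (0:ℝ)..1, (‖α₀‖ * ‖f s‖ + ‖α₁‖ * ‖f (1 - s)‖) := by
      apply intervalIntegral.integral_mono_on (by norm_num)
        (hcont1.intervalIntegrable 0 1)
      · exact hi1
      · intro s _
        calc ‖(α₀ * f s, -(α₁ * f (1 - s)))‖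
            ≤ ‖α₀ * f s‖ + ‖-(α₁ * f (1 - s))‖ := by
              rw [Prod.norm_def]
              exact max_le (le_add_of_nonneg_right (norm_nonneg _))
                (le_add_of_nonneg_left (norm_nonneg _))
          _ = ‖α₀‖ * ‖f s‖ + ‖α₁‖ * ‖f (1 - s)‖ := by rw [norm_neg, norm_mul, norm_mul]
    have step2 : (∫ s in (0:ℝ)..1, (‖α₀‖ * ‖f s‖ + ‖α₁‖ * ‖f (1 - s)‖))
        = (‖α₀‖ + ‖α₁‖) * ∫ s in (0:ℝ)..1, ‖f s‖ := by
      rw [intervalIntegral.integral_add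
        (by apply Continuous.intervalIntegrable; fun_prop :
          IntervalIntegrable (fun s : ℝ => ‖α₀‖ * ‖f s‖) volume 0 1)
        (by apply Continuous.intervalIntegrable; fun_prop :
          IntervalIntegrable (fun s : ℝ => ‖α₁‖ * ‖f (1 - s)‖) volume 0 1),
        intervalIntegral.integral_const_mul, intervalIntegral.integral_const_mul]
      have : (∫ s in (0:ℝ)..1, ‖f (1 - s)‖) = ∫ s in (0:ℝ)..1, ‖f s‖ := by
        have := intervalIntegral.integral_comp_sub_left (a := (0:ℝ)) (b := 1)
          (fun u => ‖f u‖) 1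
        simpa using this
      rw [this]; ring
    -- Hölder step
    have step3 : (∫ s in (0:ℝ)..1, ‖f s‖) ≤ (∫ x in (0:ℝ)..1, ‖f x‖ ^ p) ^ (1 / p) := by
      rw [intervalIntegral.integral_of_le (by norm_num : (0:ℝ) ≤ 1),
        intervalIntegral.integral_of_le (by norm_num : (0:ℝ) ≤ 1)]
      set μ := volume.restrict (Ioc (0:ℝ) 1) with hμ
      haveI hμfin : IsFiniteMeasure μ := by
        constructor
        rw [hμ, Measure.restrict_apply_univ, Real.volume_Ioc]
        norm_num
      rcases eq_or_lt_of_le hp with hp1 | hp1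
      · rw [← hp1]
        simp [Real.rpow_one]
      · have hpq : p.HolderConjugate (p / (p - 1)) := Real.HolderConjugate.conjExponent hp1
        have hmf : MemLp f (ENNReal.ofReal p) μ := by
          refine MemLp.of_bound hfc.aestronglyMeasurable.restrict M ?_
          refine (ae_restrict_iff' measurableSet_Ioc).mpr
            (Filter.Eventually.of_forall fun x hx => ?_)
          exact hM x ⟨le_of_lt hx.1, by linarith [hx.2]⟩
        have hmg : MemLp (fun _ : ℝ => (1:ℂ)) (ENNReal.ofReal (p / (p - 1))) μ :=
          memLp_const 1
        have H := integral_mul_norm_le_Lp_mul_Lq (μ := μ) hpq hmf hmg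
        have hμuniv : μ univ = 1 := by
          rw [hμ, Measure.restrict_apply_univ, Real.volume_Ioc]
          norm_num
        simp only [norm_one, mul_one, Real.one_rpow, MeasureTheory.integral_const,
          smul_eq_mul, measureReal_def, hμuniv, ENNReal.toReal_one, one_mul] at H
        exact H
    calc (∫ s in (0:ℝ)..1, ‖(α₀ * f s, -(α₁ * f (1 - s)))‖)
        ≤ (‖α₀‖ + ‖α₁‖) * ∫ s in (0:ℝ)..1, ‖f s‖ := by rw [← step2]; exact step1
      _ ≤ (‖α₀‖ + ‖α₁‖) * (∫ x in (0:ℝ)..1, ‖f x‖ ^ p) ^ (1 / p) := by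
          apply mul_le_mul_of_nonneg_left step3 (by positivity)
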